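/- Let μ be a ℤ-valued measure of total mass 0 on ℙ¹(F_𝔭) invariant under γ_ψ = diag(u,1) where ν_𝔭(u) = h > 0, and let z ∈ Ω_𝔭. Then the period I := ⨉∫_{ℙ¹(F_𝔭)} ((t−γ_ψz)/(t−z)) dμ(t) is independent of the choice of z. -/

import Mathlib

open scoped BigOperators
open OnePoint Classical
noncomputable section

section MulIntegral

variable {X : Type*} [TopologicalSpace X] {C : Type*} [NormedField C]

/-- A compact open subset. -/
def IsCompactOpen (U : Set X) : Prop := IsCompact U ∧ IsOpen U

/-- `P` is a finite partition of `A` into compact open subsets. -/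
def IsCompactOpenPartition (A : Set X) (P : Finset (Set X)) : Prop :=
  (∀ U ∈ P, IsCompactOpen U) ∧ (⋃ U ∈ P, U) = A ∧
    (P : Set (Set X)).PairwiseDisjoint id

/-- `P` refines `Q`: every member of `P` is contained in some member of `Q`. -/
def PartitionRefines (P Q : Finset (Set X)) : Prop :=
  ∀ U ∈ P, ∃ V ∈ Q, U ⊆ V

/-- `I` is the multiplicative integral `⨉∫_A f dμ`. -/
def IsMulIntegralOn (μ : Set X → ℤ) (f : X → C) (A : Set X) (I : C) : Prop :=
  ∀ ε : ℝ, 0 < ε → ∃ Q : Finset (Set X), IsCompactOpenPartition A Q ∧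
    ∀ P : Finset (Set X), IsCompactOpenPartition A P → PartitionRefines P Q →
      ∀ t : Set X → X, (∀ U ∈ P, U.Nonempty → t U ∈ U) →
        ‖(∏ U ∈ P, f (t U) ^ μ U) - I‖ < ε

/-- The multiplicative integral over the whole space. -/
def IsMulIntegral (μ : Set X → ℤ) (f : X → C) (I : C) : Prop :=
  IsMulIntegralOn μ f Set.univ I

end MulIntegral


set_option linter.unusedSectionVars false
set_option linter.unusedVariables false
set_option maxHeartbeats 1000000

namespace HLaux
/-! ### Auxiliary lemmas: ultrametric estimates -/


variable {C : Type*} [NormedField C] [IsUltrametricDist C]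

lemma norm_sub_le_max (a b : C) : ‖a - b‖ ≤ max ‖a‖ ‖b‖ := by
  simpa [sub_eq_add_neg] using IsUltrametricDist.norm_add_le_max a (-b)

lemma norm_eq_of_norm_sub_lt {a b : C} (h : ‖a - b‖ < ‖b‖) : ‖a‖ = ‖b‖ := by
  have h1 : ‖a - b‖ ≠ ‖b‖ := ne_of_lt h
  have := IsUltrametricDist.norm_add_eq_max_of_norm_ne_norm (x := a - b) (y := b) h1
  simpa [max_eq_right (le_of_lt h)] using this

lemma norm_one_of_norm_sub_one_lt {x : C} (h : ‖x - 1‖ < 1) : ‖x‖ = 1 := by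
  simpa using norm_eq_of_norm_sub_lt (a := x) (b := 1) (by simpa using h)

lemma norm_pow_sub_one_le {x : C} {δ : ℝ} (hδ : δ < 1) (h : ‖x - 1‖ ≤ δ) (n : ℕ) :
    ‖x ^ n - 1‖ ≤ δ := by
  have hx1 : ‖x‖ = 1 := norm_one_of_norm_sub_one_lt (lt_of_le_of_lt h hδ)
  induction n with
  | zero => simpa using (norm_nonneg (x - 1)).trans h
  | succ n ih =>
      have : x ^ (n + 1) - 1 = x ^ n * (x - 1) + (x ^ n - 1) := by ring
      rw [this]
      refine (IsUltrametricDist.norm_add_le_max _ _).trans (max_le ?_ ih)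
      rw [norm_mul, norm_pow, hx1]
      simpa using h

lemma norm_zpow_sub_one_le {x : C} {δ : ℝ} (hδ : δ < 1) (h : ‖x - 1‖ ≤ δ) (m : ℤ) :
    ‖x ^ m - 1‖ ≤ δ := by
  have hx1 : ‖x‖ = 1 := norm_one_of_norm_sub_one_lt (lt_of_le_of_lt h hδ)
  have hx0 : x ≠ 0 := by
    intro hx; rw [hx] at hx1; simp at hx1
  rcases m with n | n
  · simpa using norm_pow_sub_one_le hδ h n
  · have hxn : x ^ (n + 1) ≠ 0 := pow_ne_zero _ hx0
    have : x ^ (Int.negSucc n) - 1 = (1 - x ^ (n + 1)) * (x ^ (n + 1))⁻¹ := by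
      rw [zpow_negSucc]
      field_simp
    rw [this, norm_mul, norm_inv, norm_pow, hx1]
    simpa [norm_sub_rev] using norm_pow_sub_one_le hδ h (n + 1)

lemma norm_prod_sub_one_le {ι : Type*} {s : Finset ι} {f : ι → C} {δ : ℝ}
    (hδ0 : 0 ≤ δ) (hδ : δ < 1) (h : ∀ i ∈ s, ‖f i - 1‖ ≤ δ) :
    ‖(∏ i ∈ s, f i) - 1‖ ≤ δ := by
  classical
  induction s using Finset.cons_induction with
  | empty => simpa using hδ0
  | cons a s ha ih =>
      rw [Finset.prod_cons]
      have hb : ‖(∏ i ∈ s, f i) - 1‖ ≤ δ := ih (fun i hi => h i (Finset.mem_cons.2 (Or.inr hi)))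
      have ha' : ‖f a - 1‖ ≤ δ := h a (Finset.mem_cons_self a s)
      have hbn : ‖∏ i ∈ s, f i‖ = 1 := norm_one_of_norm_sub_one_lt (lt_of_le_of_lt hb hδ)
      have : f a * ∏ i ∈ s, f i - 1 = (f a - 1) * ∏ i ∈ s, f i + (∏ i ∈ s, f i - 1) := by ring
      rw [this]
      refine (IsUltrametricDist.norm_add_le_max _ _).trans (max_le ?_ hb)
      rw [norm_mul, hbn, mul_one]; exact ha'

lemma norm_prod_zpow_sub_one_le {ι : Type*} {s : Finset ι} {c : ι → C} {m : ι → ℤ} {δ : ℝ}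
    (hδ0 : 0 ≤ δ) (hδ : δ < 1) (h : ∀ i ∈ s, m i ≠ 0 → ‖c i - 1‖ ≤ δ) :
    ‖(∏ i ∈ s, c i ^ m i) - 1‖ ≤ δ := by
  refine norm_prod_sub_one_le hδ0 hδ (fun i hi => ?_)
  by_cases hm : m i = 0
  · simpa [hm] using hδ0
  · exact norm_zpow_sub_one_le hδ (h i hi hm) (m i)

lemma zpow_finset_sum {ι : Type*} {x : C} (hx : x ≠ 0) (s : Finset ι) (m : ι → ℤ) :
    x ^ (∑ i ∈ s, m i) = ∏ i ∈ s, x ^ m i := by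
  classical
  induction s using Finset.cons_induction with
  | empty => simp
  | cons a s ha ih => rw [Finset.sum_cons, Finset.prod_cons, zpow_add₀ hx, ih]


/-! ### Auxiliary lemmas about compact open partitions and measures -/


variable {X : Type*} [TopologicalSpace X]

lemma isCompactOpen_empty : IsCompactOpen (∅ : Set X) := ⟨isCompact_empty, isOpen_empty⟩

lemma mu_empty (μ : Set X → ℤ)
    (hadd : ∀ U V : Set X, IsCompactOpen U → IsCompactOpen V → Disjoint U V →
      μ (U ∪ V) = μ U + μ V) : μ ∅ = 0 := by
  have := hadd ∅ ∅ isCompactOpen_empty isCompactOpen_empty disjoint_bot_left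
  simp at this
  omega

/-- Pieces of a compact open partition of `univ` are closed. -/
lemma piece_closed {P : Finset (Set X)} (hP : IsCompactOpenPartition (Set.univ) P)
    {V : Set X} (hV : V ∈ P) : IsClosed V := by
  have hcompl : Vᶜ = ⋃ W ∈ P.erase V, W := by
    ext x
    simp only [Set.mem_compl_iff, Set.mem_iUnion, exists_prop]
    constructor
    · intro hx
      have hxu : x ∈ ⋃ U ∈ P, U := by rw [hP.2.1]; trivial
      simp only [Set.mem_iUnion, exists_prop] at hxu
      obtain ⟨W, hW, hxW⟩ := hxu
      refine ⟨W, Finset.mem_erase.2 ⟨?_, hW⟩, hxW⟩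
      rintro rfl; exact hx hxW
    · rintro ⟨W, hW, hxW⟩ hxV
      rcases Finset.mem_erase.1 hW with ⟨hne, hWP⟩
      exact (hP.2.2 hWP hV hne).le_bot ⟨hxW, hxV⟩ 
  rw [← isOpen_compl_iff, hcompl]
  exact isOpen_biUnion (fun W hW => (hP.1 W (Finset.mem_of_mem_erase hW)).2)

lemma isCompactOpen_biUnion {F : Finset (Set X)} (h : ∀ V ∈ F, IsCompactOpen V) :
    IsCompactOpen (⋃ V ∈ F, V) := by
  classical
  induction F using Finset.cons_induction with
  | empty => simpa using isCompactOpen_empty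
  | cons a F ha ih =>
      rw [Finset.cons_eq_insert, Finset.set_biUnion_insert]
      have h1 := h a (Finset.mem_cons_self a F)
      have h2 := ih (fun V hV => h V (Finset.mem_cons.2 (Or.inr hV)))
      exact ⟨h1.1.union h2.1, h1.2.union h2.2⟩

lemma isClosed_biUnion_finset {F : Finset (Set X)} (h : ∀ V ∈ F, IsClosed V) :
    IsClosed (⋃ V ∈ F, V) := by
  classical
  induction F using Finset.cons_induction with
  | empty => simpa using isClosed_empty
  | cons a F ha ih =>
      rw [Finset.cons_eq_insert, Finset.set_biUnion_insert]
      exact (h a (Finset.mem_cons_self a F)).union (ih (fun V hV => h V (Finset.mem_cons.2 (Or.inr hV))))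

lemma mu_inter_biUnion (μ : Set X → ℤ)
    (hadd : ∀ U V : Set X, IsCompactOpen U → IsCompactOpen V → Disjoint U V →
      μ (U ∪ V) = μ U + μ V)
    {U : Set X} (hU : IsCompactOpen U) (F : Finset (Set X))
    (hF : ∀ V ∈ F, IsCompactOpen V) (hFc : ∀ V ∈ F, IsClosed V)
    (hdisj : (F : Set (Set X)).PairwiseDisjoint id) :
    μ (U ∩ ⋃ V ∈ F, V) = ∑ V ∈ F, μ (U ∩ V) := by
  classical
  induction F using Finset.cons_induction with
  | empty => simpa using mu_empty μ hadd
  | cons a F ha ih =>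
      have hFsub : ∀ V ∈ F, IsCompactOpen V := fun V hV => hF V (Finset.mem_cons.2 (Or.inr hV))
      have hFcsub : ∀ V ∈ F, IsClosed V := fun V hV => hFc V (Finset.mem_cons.2 (Or.inr hV))
      have hdisjsub : (F : Set (Set X)).PairwiseDisjoint id := by
        intro x hx y hy hxy
        exact hdisj (by simp [hx]) (by simp [hy]) hxy
      have ha' := hF a (Finset.mem_cons_self a F)
      have hac := hFc a (Finset.mem_cons_self a F)
      have key : U ∩ ⋃ V ∈ Finset.cons a F ha, V = (U ∩ a) ∪ (U ∩ ⋃ V ∈ F, V) := by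
        rw [Finset.cons_eq_insert, Finset.set_biUnion_insert, Set.inter_union_distrib_left]
      rw [key, Finset.sum_cons, ← ih hFsub hFcsub hdisjsub]
      refine hadd _ _ ⟨hU.1.inter_right hac, hU.2.inter ha'.2⟩
        ⟨hU.1.inter_right (isClosed_biUnion_finset hFcsub), hU.2.inter (isCompactOpen_biUnion hFsub).2⟩ ?_
      have hdaF : Disjoint a (⋃ V ∈ F, V) := by
        rw [Set.disjoint_iUnion₂_right]
        intro V hV
        refine hdisj (by simp) (by simp [hV]) ?_
        rintro rfl; exact ha hV
      exact Disjoint.mono Set.inter_subset_right Set.inter_subset_right hdaF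

/-- Fiber decomposition of the measure of a compact open set along a partition. -/
lemma mu_fiber (μ : Set X → ℤ)
    (hadd : ∀ U V : Set X, IsCompactOpen U → IsCompactOpen V → Disjoint U V →
      μ (U ∪ V) = μ U + μ V)
    {U : Set X} (hU : IsCompactOpen U)
    {Y : Finset (Set X)} (hY : IsCompactOpenPartition Set.univ Y) :
    μ U = ∑ V ∈ Y, μ (U ∩ V) := by
  have := mu_inter_biUnion μ hadd hU Y hY.1 (fun V hV => piece_closed hY hV) hY.2.2
  rwa [hY.2.1, Set.inter_univ] at this



end HLaux

namespace HLaux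

section Geometry

variable {C : Type*} [NormedField C] [IsUltrametricDist C] {Kp : Subfield C}



/-- The Möbius action `t ↦ a·t`, `∞ ↦ ∞` on `ℙ¹(Kp)`. -/
def phi (a : Kp) : OnePoint Kp → OnePoint Kp :=
  fun p => p.elim OnePoint.infty (fun t => OnePoint.some (a * t))

@[simp] lemma phi_infty (a : Kp) : phi a (∞ : OnePoint Kp) = ∞ := rfl

@[simp] lemma phi_coe (a t : Kp) : phi a (↑t : OnePoint Kp) = (↑(a * t) : OnePoint Kp) := rfl

lemma phi_phi (a : Kp) (ha : a ≠ 0) (p : OnePoint Kp) : phi a (phi a⁻¹ p) = p := by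
  cases p with
  | infty => rfl
  | coe t => show (↑(a * (a⁻¹ * t)) : OnePoint Kp) = ↑t; rw [mul_inv_cancel_left₀ ha]

lemma phi_phi' (a : Kp) (ha : a ≠ 0) (p : OnePoint Kp) : phi a⁻¹ (phi a p) = p := by
  cases p with
  | infty => rfl
  | coe t => show (↑(a⁻¹ * (a * t)) : OnePoint Kp) = ↑t; rw [inv_mul_cancel_left₀ ha]

lemma phi_image_image (a : Kp) (ha : a ≠ 0) (U : Set (OnePoint Kp)) :
    phi a '' (phi a⁻¹ '' U) = U := by
  rw [← Set.image_comp]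
  have : phi a ∘ phi a⁻¹ = id := funext (phi_phi a ha)
  rw [this, Set.image_id]

lemma phi_image_image' (a : Kp) (ha : a ≠ 0) (U : Set (OnePoint Kp)) :
    phi a⁻¹ '' (phi a '' U) = U := by
  rw [← Set.image_comp]
  have : phi a⁻¹ ∘ phi a = id := funext (phi_phi' a ha)
  rw [this, Set.image_id]

lemma phi_injective (a : Kp) (ha : a ≠ 0) : Function.Injective (phi a) := by
  intro p q h
  have := congrArg (phi a⁻¹) h
  rwa [phi_phi' a ha, phi_phi' a ha] at this

lemma coe_preimage_phi_image (a : Kp) (s : Set (OnePoint Kp)) :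
    ((↑) : Kp → OnePoint Kp) ⁻¹' (phi a '' s) = (a * ·) '' (((↑) : Kp → OnePoint Kp) ⁻¹' s) := by
  ext y
  simp only [Set.mem_preimage, Set.mem_image]
  constructor
  · rintro ⟨p, hp, hpy⟩
    cases p with
    | infty => exact absurd hpy (by simp)
    | coe t =>
        refine ⟨t, hp, ?_⟩
        have : (↑(a * t) : OnePoint Kp) = ↑y := hpy
        exact OnePoint.coe_eq_coe.1 this
  · rintro ⟨t, ht, hty⟩
    exact ⟨↑t, ht, by rw [phi_coe, hty]⟩

lemma isOpen_phi_image {a : Kp} (ha : a ≠ 0) {s : Set (OnePoint Kp)} (hs : IsOpen s) :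
    IsOpen (phi a '' s) := by
  have hmul : ∀ w : Set Kp, (a * ·) '' w = (Homeomorph.mulLeft₀ a ha) '' w := fun w => rfl
  by_cases hinf : (∞ : OnePoint Kp) ∈ s
  · have hmem : (∞ : OnePoint Kp) ∈ phi a '' s := ⟨∞, hinf, rfl⟩
    rcases (OnePoint.isOpen_iff_of_mem hinf).1 hs with ⟨hcl, hcp⟩
    rw [OnePoint.isOpen_iff_of_mem hmem, coe_preimage_phi_image]
    rw [hmul, ← Set.image_compl_eq (Homeomorph.mulLeft₀ a ha).bijective]
    exact ⟨(Homeomorph.mulLeft₀ a ha).isClosedMap _ hcl,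
      hcp.image (Homeomorph.mulLeft₀ a ha).continuous⟩
  · have hmem : (∞ : OnePoint Kp) ∉ phi a '' s := by
      rintro ⟨p, hp, hpe⟩
      cases p with
      | infty => exact hinf hp
      | coe t => exact (OnePoint.coe_ne_infty (a * t)) hpe
    rw [OnePoint.isOpen_iff_of_notMem hmem, coe_preimage_phi_image, hmul]
    exact (Homeomorph.mulLeft₀ a ha).isOpenMap _ ((OnePoint.isOpen_iff_of_notMem hinf).1 hs)

lemma phi_preimage (a : Kp) (ha : a ≠ 0) (s : Set (OnePoint Kp)) :
    phi a ⁻¹' s = phi a⁻¹ '' s := by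
  ext p
  constructor
  · intro hp
    exact ⟨phi a p, hp, phi_phi' a ha p⟩
  · rintro ⟨q, hq, rfl⟩
    simpa [Set.mem_preimage, phi_phi a ha] using hq

lemma continuous_phi {a : Kp} (ha : a ≠ 0) : Continuous (phi a : OnePoint Kp → OnePoint Kp) := by
  rw [continuous_def]
  intro s hs
  rw [phi_preimage a ha]
  exact isOpen_phi_image (inv_ne_zero ha) hs




/-- The closed ball in `Kp`, with the norm measured in `C`. -/
def KB (Kp : Subfield C) (x : Kp) (r : ℝ) : Set Kp := {y : Kp | ‖(y : C) - (x : C)‖ ≤ r}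

lemma mem_KB {x y : Kp} {r : ℝ} : y ∈ KB Kp x r ↔ ‖(y : C) - (x : C)‖ ≤ r := Iff.rfl

lemma isClosed_KB (x : Kp) (r : ℝ) : IsClosed (KB Kp x r) := by
  have : KB Kp x r = (fun y : Kp => ‖(y : C) - (x : C)‖) ⁻¹' (Set.Iic r) := rfl
  rw [this]
  exact IsClosed.preimage ((continuous_subtype_val.sub continuous_const).norm) isClosed_Iic

lemma KB_eq_preimage (x : Kp) (r : ℝ) :
    KB Kp x r = (Subtype.val) ⁻¹' (Metric.closedBall (x : C) r) := by
  ext y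
  simp [mem_KB, Metric.mem_closedBall, dist_eq_norm]

lemma isOpen_KB (x : Kp) {r : ℝ} (hr : 0 < r) : IsOpen (KB Kp x r) := by
  rw [KB_eq_preimage]
  exact (IsUltrametricDist.isOpen_closedBall (x : C) hr.ne').preimage continuous_subtype_val

lemma KB_mono (x : Kp) {r r' : ℝ} (h : r ≤ r') : KB Kp x r ⊆ KB Kp x r' :=
  fun y hy => le_trans hy h

lemma KB_subset_zero {x : Kp} {s r : ℝ} (hx : x ∈ KB Kp 0 r) (hs : s ≤ r) :
    KB Kp x s ⊆ KB Kp 0 r := by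
  intro y hy
  have hx' : ‖(x : C)‖ ≤ r := by simpa [mem_KB] using hx
  have hy' : ‖(y : C) - (x : C)‖ ≤ s := hy
  have : (y : C) - 0 = ((y : C) - x) + x := by ring
  simp only [mem_KB, ZeroMemClass.coe_zero, this]
  exact le_trans (IsUltrametricDist.norm_add_le_max _ _) (max_le (le_trans hy' hs) hx')

/-- Bootstrapping compactness of balls from one nonempty compact open set. -/
lemma isCompact_KB_zero
    (hcase : ∃ W : Set Kp, W.Nonempty ∧ IsCompact W ∧ IsOpen W)
    (u : Kp) (hu0 : u ≠ 0) (hu1 : ‖(u : C)‖ < 1) (r : ℝ) :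
    IsCompact (KB Kp 0 r) := by
  obtain ⟨W, ⟨w0, hw0⟩, hWc, hWo⟩ := hcase
  obtain ⟨ρ, hρ, hball⟩ := Metric.isOpen_iff.1 hWo w0 hw0
  -- seed : compact ball around w0
  have hsub : KB Kp w0 (ρ / 2) ⊆ W := by
    intro y hy
    apply hball
    have : dist y w0 = ‖(y : C) - (w0 : C)‖ := by
      rw [Subtype.dist_eq, dist_eq_norm]
    rw [Metric.mem_ball, this]
    exact lt_of_le_of_lt hy (by linarith)
  have seed : IsCompact (KB Kp w0 (ρ / 2)) :=
    IsCompact.of_isClosed_subset hWc (isClosed_KB w0 (ρ / 2)) hsub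
  -- translate to 0
  have htrans : KB Kp 0 (ρ / 2) = (fun y : Kp => y - w0) '' KB Kp w0 (ρ / 2) := by
    ext v
    simp only [mem_KB, Set.mem_image, ZeroMemClass.coe_zero, sub_zero]
    constructor
    · intro hv
      refine ⟨v + w0, ?_, by ring⟩
      show ‖((v + w0 : Kp) : C) - (w0 : C)‖ ≤ ρ / 2
      push_cast
      simpa using hv
    · rintro ⟨y, hy, rfl⟩
      show ‖((y - w0 : Kp) : C)‖ ≤ ρ / 2
      push_cast
      exact hy
  have seed0 : IsCompact (KB Kp 0 (ρ / 2)) := by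
    rw [htrans]
    exact seed.image (continuous_id.sub continuous_const)
  -- scaling
  have hscale : ∀ c : Kp, c ≠ 0 → IsCompact (KB Kp 0 (ρ / 2 * ‖(c : C)‖)) := by
    intro c hc
    have him : KB Kp 0 (ρ / 2 * ‖(c : C)‖) = (fun y : Kp => c * y) '' KB Kp 0 (ρ / 2) := by
      ext v
      simp only [mem_KB, Set.mem_image, ZeroMemClass.coe_zero, sub_zero]
      constructor
      · intro hv
        refine ⟨c⁻¹ * v, ?_, by field_simp⟩
        show ‖((c⁻¹ * v : Kp) : C)‖ ≤ ρ / 2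
        push_cast
        rw [norm_mul, norm_inv]
        have hc' : (0 : ℝ) < ‖(c : C)‖ := by
          simpa [norm_pos_iff] using (by exact_mod_cast hc : (c : C) ≠ 0)
        rw [inv_mul_le_iff₀ hc']
        linarith [hv]
      · rintro ⟨y, hy, rfl⟩
        show ‖((c * y : Kp) : C)‖ ≤ ρ / 2 * ‖(c : C)‖
        push_cast
        rw [norm_mul, mul_comm]
        exact mul_le_mul_of_nonneg_right hy (norm_nonneg _)
    rw [him]
    exact seed0.image (continuous_const.mul continuous_id)
  -- find a big enough scaled ball
  set r' : ℝ := max r 1 with hr'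
  have hr'pos : 0 < r' := lt_of_lt_of_le one_pos (le_max_right _ _)
  have hρr : 0 < ρ / 2 / r' := by positivity
  obtain ⟨n, hn⟩ := exists_pow_lt_of_lt_one hρr hu1
  have hu0C : ((u : C)) ≠ 0 := by exact_mod_cast hu0
  have hunorm : (0:ℝ) < ‖(u : C)‖ := norm_pos_iff.mpr hu0C
  have hupow : (0:ℝ) < ‖(u : C)‖ ^ n := pow_pos hunorm n
  have hbig : r ≤ ρ / 2 * ‖(((u⁻¹ : Kp) ^ n : Kp) : C)‖ := by
    have hcoe : ‖(((u⁻¹ : Kp) ^ n : Kp) : C)‖ = (‖(u : C)‖ ^ n)⁻¹ := by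
      push_cast
      rw [norm_pow, norm_inv, inv_pow]
    rw [hcoe]
    have h1 : r' * ‖(u : C)‖ ^ n ≤ ρ / 2 := by
      have := mul_le_mul_of_nonneg_left (le_of_lt hn) (le_of_lt hr'pos)
      calc r' * ‖(u : C)‖ ^ n ≤ r' * (ρ / 2 / r') := this
        _ = ρ / 2 := by field_simp
    have h2 : r' ≤ ρ / 2 * (‖(u : C)‖ ^ n)⁻¹ := by
      rw [le_mul_inv_iff₀ hupow, mul_comm] at *
      linarith [h1]
    exact le_trans (le_max_left _ _) h2
  have hc : ((u⁻¹ : Kp) ^ n : Kp) ≠ 0 := pow_ne_zero _ (inv_ne_zero hu0)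
  exact IsCompact.of_isClosed_subset (hscale _ hc) (isClosed_KB 0 r) (KB_mono 0 hbig)

lemma isCompact_KB
    (hcase : ∃ W : Set Kp, W.Nonempty ∧ IsCompact W ∧ IsOpen W)
    (u : Kp) (hu0 : u ≠ 0) (hu1 : ‖(u : C)‖ < 1) (x : Kp) (r : ℝ) :
    IsCompact (KB Kp x r) := by
  have h0 := isCompact_KB_zero hcase u hu0 hu1 r
  have : KB Kp x r = (fun y : Kp => x + y) '' KB Kp 0 r := by
    ext v
    simp only [mem_KB, Set.mem_image, ZeroMemClass.coe_zero, sub_zero]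
    constructor
    · intro hv
      refine ⟨v - x, ?_, by ring⟩
      show ‖((v - x : Kp) : C)‖ ≤ r
      push_cast
      exact hv
    · rintro ⟨y, hy, rfl⟩
      show ‖((x + y : Kp) : C) - (x : C)‖ ≤ r
      push_cast
      simpa using hy
  rw [this]
  exact h0.image (continuous_const.add continuous_id)




def OB (x : Kp) (r : ℝ) : Set (OnePoint Kp) := ((↑) : Kp → OnePoint Kp) '' (KB Kp x r)

def OInf (Kp : Subfield C) (r : ℝ) : Set (OnePoint Kp) :=
  {p | p = ∞ ∨ ∃ t : Kp, p = ↑t ∧ r < ‖(t : C)‖}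

lemma infty_mem_OInf (r : ℝ) : (∞ : OnePoint Kp) ∈ OInf Kp r := Or.inl rfl

lemma coe_mem_OInf {r : ℝ} {t : Kp} : (↑t : OnePoint Kp) ∈ OInf Kp r ↔ r < ‖(t : C)‖ := by
  constructor
  · rintro (h | ⟨s, hs, hlt⟩)
    · exact absurd h (OnePoint.coe_ne_infty t)
    · rwa [OnePoint.coe_eq_coe.1 hs]
  · intro h; exact Or.inr ⟨t, rfl, h⟩

lemma coe_preimage_OInf (r : ℝ) :
    ((↑) : Kp → OnePoint Kp) ⁻¹' (OInf Kp r) = {t : Kp | r < ‖(t : C)‖} := by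
  ext t; simpa using coe_mem_OInf (r := r) (t := t)

lemma coe_preimage_OInf_compl (r : ℝ) :
    (((↑) : Kp → OnePoint Kp) ⁻¹' (OInf Kp r))ᶜ = KB Kp 0 r := by
  rw [coe_preimage_OInf]
  ext t
  simp [mem_KB, not_lt]

lemma isOpen_OInf (hcase : ∃ W : Set Kp, W.Nonempty ∧ IsCompact W ∧ IsOpen W)
    (u : Kp) (hu0 : u ≠ 0) (hu1 : ‖(u : C)‖ < 1) {r : ℝ} (hr : 0 < r) :
    IsOpen (OInf Kp r) := by
  rw [OnePoint.isOpen_iff_of_mem (infty_mem_OInf r)]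
  rw [show (OnePoint.some ⁻¹' (OInf Kp r))ᶜ = KB Kp 0 r from coe_preimage_OInf_compl r]
  exact ⟨isClosed_KB 0 r, isCompact_KB hcase u hu0 hu1 0 r⟩

lemma OInf_compl (r : ℝ) : (OInf Kp r)ᶜ = ((↑) : Kp → OnePoint Kp) '' (KB Kp 0 r) := by
  ext p
  cases p with
  | infty =>
      simp only [Set.mem_compl_iff, Set.mem_image]
      constructor
      · intro h; exact absurd (infty_mem_OInf r) h
      · rintro ⟨y, _, h⟩; exact absurd h (OnePoint.coe_ne_infty y)
  | coe t =>
      simp only [Set.mem_compl_iff, coe_mem_OInf, not_lt, Set.mem_image]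
      constructor
      · intro h
        exact ⟨t, by simpa [mem_KB] using h, rfl⟩
      · rintro ⟨y, hy, hyt⟩
        have : y = t := OnePoint.coe_eq_coe.1 hyt
        subst this
        simpa [mem_KB] using hy

lemma isClosed_OInf {r : ℝ} (hr : 0 < r) : IsClosed (OInf Kp r) := by
  rw [← isOpen_compl_iff, OInf_compl]
  exact OnePoint.isOpen_image_coe.2 (isOpen_KB 0 hr)

lemma isCompact_OInf {r : ℝ} (hr : 0 < r) : IsCompact (OInf Kp r) :=
  (isClosed_OInf hr).isCompact

/-! ### a finite partition of `ℙ¹(Kp)` into small balls and a ball at infinity -/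

lemma exists_ball_partition
    (hcase : ∃ W : Set Kp, W.Nonempty ∧ IsCompact W ∧ IsOpen W)
    (u : Kp) (hu0 : u ≠ 0) (hu1 : ‖(u : C)‖ < 1)
    {r s : ℝ} (hs : 0 < s) (hsr : s ≤ r) :
    ∃ QB : Finset (Set (OnePoint Kp)), IsCompactOpenPartition Set.univ QB ∧
      ∀ W ∈ QB, (∃ x : Kp, x ∈ KB Kp 0 r ∧ W = OB x s) ∨ W = OInf Kp r := by
  classical
  have hr : 0 < r := lt_of_lt_of_le hs hsr
  -- finite subcover of the ball of radius r by balls of radius s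
  have hKBr : IsCompact (KB Kp 0 r) := isCompact_KB hcase u hu0 hu1 0 r
  have hcover : KB Kp 0 r ⊆ ⋃ (i : KB Kp 0 r), KB Kp i.1 s := by
    intro y hy
    exact Set.mem_iUnion.2 ⟨⟨y, hy⟩, by simp [mem_KB, le_of_lt hs]⟩
  obtain ⟨T, hT⟩ := hKBr.elim_finite_subcover (fun i : KB Kp 0 r => KB Kp i.1 s)
    (fun i => isOpen_KB i.1 hs) hcover
  refine ⟨insert (OInf Kp r) (T.image (fun i => OB i.1 s)), ⟨?_, ?_, ?_⟩, ?_⟩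
  · -- compact open
    intro U hU
    rcases Finset.mem_insert.1 hU with rfl | hU
    · exact ⟨isCompact_OInf hr, isOpen_OInf hcase u hu0 hu1 hr⟩
    · obtain ⟨i, _, rfl⟩ := Finset.mem_image.1 hU
      exact ⟨(isCompact_KB hcase u hu0 hu1 i.1 s).image OnePoint.continuous_coe,
        OnePoint.isOpen_image_coe.2 (isOpen_KB i.1 hs)⟩
  · -- covering
    apply Set.eq_univ_of_forall
    intro p
    cases p with
    | infty =>
        exact Set.mem_biUnion (Finset.mem_insert_self _ _) (infty_mem_OInf r)
    | coe t =>
        by_cases hlt : r < ‖(t : C)‖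
        · exact Set.mem_biUnion (Finset.mem_insert_self _ _) (coe_mem_OInf.2 hlt)
        · have ht : t ∈ KB Kp 0 r := by simpa [mem_KB] using not_lt.1 hlt
          have := hT ht
          rcases Set.mem_iUnion₂.1 this with ⟨i, hiT, hti⟩
          refine Set.mem_biUnion (Finset.mem_insert.2 (Or.inr (Finset.mem_image_of_mem _ hiT))) ?_
          exact ⟨t, hti, rfl⟩
  · -- pairwise disjoint
    intro A hA B hB hAB
    simp only [Finset.coe_insert, Set.mem_insert_iff, Finset.coe_image, Set.mem_image,
      Finset.mem_coe] at hA hB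
    simp only [Function.onFun, id_eq]
    have hOBsub : ∀ x : Kp, x ∈ KB Kp 0 r → ∀ p ∈ OB x s, p ∉ OInf Kp r := by
      rintro x hx p ⟨y, hy, rfl⟩
      rw [coe_mem_OInf, not_lt]
      have : (y : C) = ((y : C) - x) + x := by ring
      calc ‖(y : C)‖ = ‖((y : C) - x) + (x : C)‖ := by rw [← this]
        _ ≤ max ‖(y : C) - x‖ ‖(x : C)‖ := IsUltrametricDist.norm_add_le_max _ _
        _ ≤ r := max_le (le_trans hy hsr) (by simpa [mem_KB] using hx)
    have hOBeq : ∀ x x' : Kp, ∀ p, p ∈ OB x s → p ∈ OB x' s → OB x s = OB x' s := by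
      rintro x x' p ⟨y, hy, rfl⟩ hp'
      obtain ⟨y', hy', hyy'⟩ := hp'
      have : y' = y := OnePoint.coe_eq_coe.1 hyy'
      subst this
      have hb : Metric.closedBall ((x : C)) s = Metric.closedBall ((x' : C)) s := by
        have h1 : ((y' : C)) ∈ Metric.closedBall ((x : C)) s := by
          rw [Metric.mem_closedBall, dist_eq_norm]; exact hy
        have h2 : ((y' : C)) ∈ Metric.closedBall ((x' : C)) s := by
          rw [Metric.mem_closedBall, dist_eq_norm]; exact hy'
        rw [IsUltrametricDist.closedBall_eq_of_mem h1, IsUltrametricDist.closedBall_eq_of_mem h2]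
      unfold OB
      rw [KB_eq_preimage, KB_eq_preimage, hb]
    rcases hA with rfl | ⟨i, hiT, rfl⟩ <;> rcases hB with rfl | ⟨j, hjT, rfl⟩
    · exact absurd rfl hAB
    · rw [Set.disjoint_right]
      intro p hp
      exact hOBsub j.1 j.2 p hp
    · rw [Set.disjoint_left]
      intro p hp
      exact hOBsub i.1 i.2 p hp
    · rw [Set.disjoint_left]
      intro p hp hp'
      exact hAB (hOBeq i.1 j.1 p hp hp')
  · -- structure of the pieces
    intro W hW
    rcases Finset.mem_insert.1 hW with rfl | hW
    · exact Or.inr rfl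
    · obtain ⟨i, _, rfl⟩ := Finset.mem_image.1 hW
      exact Or.inl ⟨i.1, i.2, rfl⟩

/-! ### images of partitions under `phi` -/

lemma image_partition {a : Kp} (ha : a ≠ 0) {P : Finset (Set (OnePoint Kp))}
    (hP : IsCompactOpenPartition Set.univ P) :
    IsCompactOpenPartition Set.univ (P.image (fun U => phi a '' U)) := by
  classical
  refine ⟨?_, ?_, ?_⟩
  · intro W hW
    obtain ⟨U, hU, rfl⟩ := Finset.mem_image.1 hW
    exact ⟨(hP.1 U hU).1.image (continuous_phi ha), isOpen_phi_image ha (hP.1 U hU).2⟩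
  · apply Set.eq_univ_of_forall
    intro p
    have : phi a⁻¹ p ∈ ⋃ U ∈ P, U := by rw [hP.2.1]; trivial
    rcases Set.mem_iUnion₂.1 this with ⟨U, hU, hpU⟩
    exact Set.mem_biUnion (Finset.mem_image_of_mem _ hU) ⟨phi a⁻¹ p, hpU, phi_phi a ha p⟩
  · intro A hA B hB hAB
    simp only [Finset.coe_image, Set.mem_image, Finset.mem_coe] at hA hB
    simp only [Function.onFun, id_eq]
    obtain ⟨U, hU, rfl⟩ := hA
    obtain ⟨V, hV, rfl⟩ := hB
    have hUV : U ≠ V := by rintro rfl; exact hAB rfl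
    have := hP.2.2 hU hV hUV
    exact (Set.disjoint_image_of_injective (phi_injective a ha)) this

lemma mu_phi_inv_image (μ : Set (OnePoint Kp) → ℤ) (u : Kp) (hu0 : u ≠ 0)
    (hinv : ∀ V, μ (phi u '' V) = μ V) (U : Set (OnePoint Kp)) :
    μ (phi u⁻¹ '' U) = μ U :=
  calc μ (phi u⁻¹ '' U) = μ (phi u '' (phi u⁻¹ '' U)) := (hinv _).symm
    _ = μ U := by rw [phi_image_image u hu0]




lemma norm_sub_le_max' (a b : C) : ‖a - b‖ ≤ max ‖a‖ ‖b‖ := by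
  simpa [sub_eq_add_neg] using IsUltrametricDist.norm_add_le_max a (-b)

/-- The function `t ↦ (t-z)/(t-z')` on `ℙ¹(Kp)`, extended by `1` at `∞`. -/
def gfun (Kp : Subfield C) (z z' : C) : OnePoint Kp → C :=
  fun p => p.elim 1 (fun t => ((t : C) - z) / ((t : C) - z'))

lemma gfun_infty (z z' : C) : gfun Kp z z' (∞ : OnePoint Kp) = 1 := rfl

lemma gfun_coe (z z' : C) (t : Kp) :
    gfun Kp z z' (↑t : OnePoint Kp) = ((t : C) - z) / ((t : C) - z') := rfl

lemma coe_ne_of_not_range {z : C} (hz : z ∉ Set.range (fun t : Kp => (t : C))) (t : Kp) :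
    (t : C) ≠ z := fun h => hz ⟨t, h⟩

lemma gfun_ne_zero {z z' : C} (hz : z ∉ Set.range (fun t : Kp => (t : C)))
    (hz' : z' ∉ Set.range (fun t : Kp => (t : C))) (p : OnePoint Kp) :
    gfun Kp z z' p ≠ 0 := by
  cases p with
  | infty => exact one_ne_zero
  | coe t =>
      rw [gfun_coe]
      exact div_ne_zero (sub_ne_zero.2 (coe_ne_of_not_range hz t))
        (sub_ne_zero.2 (coe_ne_of_not_range hz' t))

lemma ratio_sub_one {P Q z z' : C} (hPz' : P ≠ z') (hQz : Q ≠ z) (hQz' : Q ≠ z') :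
    ((P - z) / (P - z')) / ((Q - z) / (Q - z')) - 1
      = ((P - Q) * (z - z')) / ((P - z') * (Q - z)) := by
  have h1 : P - z' ≠ 0 := sub_ne_zero.2 hPz'
  have h2 : Q - z ≠ 0 := sub_ne_zero.2 hQz
  have h3 : Q - z' ≠ 0 := sub_ne_zero.2 hQz'
  field_simp
  ring

lemma norm_ratio_sub_one {P Q z z' : C} (hPz' : P ≠ z') (hQz : Q ≠ z) (hQz' : Q ≠ z') :
    ‖((P - z) / (P - z')) / ((Q - z) / (Q - z')) - 1‖
      = ‖P - Q‖ * ‖z - z'‖ / (‖P - z'‖ * ‖Q - z‖) := by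
  rw [ratio_sub_one hPz' hQz hQz', norm_div, norm_mul, norm_mul]

/-- multiplicative oscillation bound on small balls away from `z, z'`. -/
lemma good_near {z z' : C}
    (hz : z ∉ Set.range (fun t : Kp => (t : C)))
    (hz' : z' ∉ Set.range (fun t : Kp => (t : C)))
    {d s'' δ : ℝ} (hd : 0 < d) (hδ0 : 0 ≤ δ)
    (hbound : s'' * ‖z - z'‖ ≤ δ * (d * d))
    {W : Set (OnePoint Kp)} {c : C}
    (hWpts : ∀ p ∈ W, ∃ t : Kp, p = ↑t ∧ ‖(t : C) - c‖ ≤ s''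
      ∧ d ≤ ‖(t : C) - z‖ ∧ d ≤ ‖(t : C) - z'‖) :
    ∀ p ∈ W, ∀ q ∈ W, ‖gfun Kp z z' p / gfun Kp z z' q - 1‖ ≤ δ := by
  intro p hp q hq
  obtain ⟨t, rfl, htc, htz, htz'⟩ := hWpts p hp
  obtain ⟨t', rfl, htc', htz2, htz2'⟩ := hWpts q hq
  set P := ((t : C)) with hP
  set Q := ((t' : C)) with hQ
  have hPz' : P ≠ z' := coe_ne_of_not_range hz' t
  have hQz : Q ≠ z := coe_ne_of_not_range hz t'
  have hQz' : Q ≠ z' := coe_ne_of_not_range hz' t'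
  rw [gfun_coe, gfun_coe, norm_ratio_sub_one hPz' hQz hQz']
  have hPQ : ‖P - Q‖ ≤ s'' := by
    have heq : P - Q = (P - c) - (Q - c) := by ring
    rw [heq]
    exact le_trans (norm_sub_le_max' _ _) (max_le htc htc')
  have hden : d * d ≤ ‖P - z'‖ * ‖Q - z‖ :=
    mul_le_mul htz' htz2 (le_of_lt hd) (norm_nonneg _)
  have hdd : (0:ℝ) < d * d := mul_pos hd hd
  have hnum : ‖P - Q‖ * ‖z - z'‖ ≤ s'' * ‖z - z'‖ :=
    mul_le_mul_of_nonneg_right hPQ (norm_nonneg _)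
  have hs''0 : (0:ℝ) ≤ s'' * ‖z - z'‖ := le_trans (by positivity) hnum
  calc ‖P - Q‖ * ‖z - z'‖ / (‖P - z'‖ * ‖Q - z‖)
      ≤ (s'' * ‖z - z'‖) / (d * d) := div_le_div₀ hs''0 hnum hdd hden
    _ ≤ δ := by rw [div_le_iff₀ hdd]; exact hbound

/-- multiplicative oscillation bound near infinity. -/
lemma good_far {z z' : C}
    (hz : z ∉ Set.range (fun t : Kp => (t : C)))
    (hz' : z' ∉ Set.range (fun t : Kp => (t : C)))
    {r δ : ℝ} (hr0 : 0 < r) (hzr : ‖z‖ < r) (hz'r : ‖z'‖ < r) (hδ0 : 0 ≤ δ)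
    (hbound : ‖z - z'‖ ≤ δ * r)
    {W : Set (OnePoint Kp)}
    (hWpts : ∀ p ∈ W, p = ∞ ∨ ∃ t : Kp, p = ↑t ∧ r < ‖(t : C)‖) :
    ∀ p ∈ W, ∀ q ∈ W, ‖gfun Kp z z' p / gfun Kp z z' q - 1‖ ≤ δ := by
  have hnorm_eq : ∀ t : Kp, r < ‖(t : C)‖ → ‖(t : C) - z‖ = ‖(t : C)‖ ∧ ‖(t : C) - z'‖ = ‖(t : C)‖ := by
    intro t ht
    constructor
    · have h1 : ‖((t : C) - z) - (t : C)‖ < ‖(t : C)‖ := by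
        simpa using lt_trans hzr ht
      exact norm_eq_of_norm_sub_lt h1
    · have h1 : ‖((t : C) - z') - (t : C)‖ < ‖(t : C)‖ := by
        simpa using lt_trans hz'r ht
      exact norm_eq_of_norm_sub_lt h1
  have hcoe_bound : ∀ t : Kp, r < ‖(t : C)‖ → ‖gfun Kp z z' (↑t) - 1‖ ≤ δ := by
    intro t ht
    have htz' : (t : C) - z' ≠ 0 := sub_ne_zero.2 (coe_ne_of_not_range hz' t)
    have hid : gfun Kp z z' (↑t) - 1 = (z' - z) / ((t : C) - z') := by
      rw [gfun_coe]
      field_simp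
      ring
    rw [hid, norm_div, (hnorm_eq t ht).2]
    have ht0 : (0:ℝ) < ‖(t : C)‖ := lt_trans hr0 ht
    rw [div_le_iff₀ ht0]
    calc ‖z' - z‖ = ‖z - z'‖ := by rw [norm_sub_rev]
      _ ≤ δ * r := hbound
      _ ≤ δ * ‖(t : C)‖ := mul_le_mul_of_nonneg_left (le_of_lt ht) hδ0
  have hgnorm : ∀ t : Kp, r < ‖(t : C)‖ → ‖gfun Kp z z' (↑t)‖ = 1 := by
    intro t ht
    rw [gfun_coe, norm_div, (hnorm_eq t ht).1, (hnorm_eq t ht).2]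
    have ht0 : (0:ℝ) < ‖(t : C)‖ := lt_trans hr0 ht
    field_simp
  intro p hp q hq
  rcases hWpts p hp with rfl | ⟨t, rfl, ht⟩ <;> rcases hWpts q hq with hq' | ⟨t', rfl, ht'⟩
  · rw [hq']
    simp [gfun_infty, hδ0]
  · -- p = ∞, q = coe
    rw [gfun_infty]
    have hgq : gfun Kp z z' (↑t') ≠ 0 := gfun_ne_zero hz hz' _
    have : (1 : C) / gfun Kp z z' (↑t') - 1 = (1 - gfun Kp z z' (↑t')) / gfun Kp z z' (↑t') := by
      field_simp
    rw [this, norm_div, hgnorm t' ht', div_one, norm_sub_rev]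
    exact hcoe_bound t' ht'
  · rw [hq', gfun_infty, div_one]
    exact hcoe_bound t ht
  · -- both coe
    set P := ((t : C)) with hP
    set Q := ((t' : C)) with hQ
    have hPz' : P ≠ z' := coe_ne_of_not_range hz' t
    have hQz : Q ≠ z := coe_ne_of_not_range hz t'
    have hQz' : Q ≠ z' := coe_ne_of_not_range hz' t'
    rw [gfun_coe, gfun_coe, norm_ratio_sub_one hPz' hQz hQz']
    have hPn : ‖P - z'‖ = ‖P‖ := (hnorm_eq t ht).2
    have hQn : ‖Q - z‖ = ‖Q‖ := (hnorm_eq t' ht').1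
    rw [hPn, hQn]
    have hPQ : ‖P - Q‖ ≤ max ‖P‖ ‖Q‖ := by
      simpa [sub_eq_add_neg] using IsUltrametricDist.norm_add_le_max P (-Q)
    have hP0 : (0:ℝ) < ‖P‖ := lt_trans hr0 ht
    have hQ0 : (0:ℝ) < ‖Q‖ := lt_trans hr0 ht'
    have hnum : ‖P - Q‖ * ‖z - z'‖ ≤ max ‖P‖ ‖Q‖ * (δ * r) :=
      mul_le_mul hPQ hbound (norm_nonneg _) (le_max_iff.2 (Or.inl (le_of_lt hP0)))
    have hmaxpos : (0:ℝ) < max ‖P‖ ‖Q‖ := lt_max_of_lt_left hP0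
    have hden : max ‖P‖ ‖Q‖ * r ≤ ‖P‖ * ‖Q‖ := by
      rcases le_total ‖P‖ ‖Q‖ with h | h
      · rw [max_eq_right h, mul_comm]
        exact mul_le_mul_of_nonneg_right (le_of_lt ht) (norm_nonneg _)
      · rw [max_eq_left h]
        exact mul_le_mul_of_nonneg_left (le_of_lt ht') (norm_nonneg _)
    have hnum0 : (0:ℝ) ≤ max ‖P‖ ‖Q‖ * (δ * r) := le_trans (by positivity) hnum
    calc ‖P - Q‖ * ‖z - z'‖ / (‖P‖ * ‖Q‖)
        ≤ (max ‖P‖ ‖Q‖ * (δ * r)) / (max ‖P‖ ‖Q‖ * r) :=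
          div_le_div₀ hnum0 hnum (mul_pos hmaxpos hr0) hden
      _ = δ := by
          rw [mul_div_mul_left _ _ (ne_of_gt hmaxpos), mul_div_assoc,
            div_self (ne_of_gt hr0), mul_one]




/-- The key pointwise identity `f_z(p) g(p) = f_{z'}(p) g(γ⁻¹ p)`. -/
lemma key_id (u : Kp) (hu0 : u ≠ 0) (z z' : C)
    (hz : z ∉ Set.range (fun t : Kp => (t : C)))
    (hz' : z' ∉ Set.range (fun t : Kp => (t : C)))
    (p : OnePoint Kp) :
    (p.elim 1 (fun t => ((t : C) - (u : C) * z) / ((t : C) - z))) * gfun Kp z z' p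
      = (p.elim 1 (fun t => ((t : C) - (u : C) * z') / ((t : C) - z'))) *
        gfun Kp z z' (phi u⁻¹ p) := by
  cases p with
  | infty => rfl
  | coe t =>
      have hphi : phi u⁻¹ (↑t : OnePoint Kp) = (↑(u⁻¹ * t) : OnePoint Kp) := rfl
      rw [hphi]
      show ((t : C) - (u : C) * z) / ((t : C) - z) * ((((t : C)) - z) / (((t : C)) - z'))
        = ((t : C) - (u : C) * z') / ((t : C) - z') *
          (((((u⁻¹ * t : Kp)) : C) - z) / ((((u⁻¹ * t : Kp)) : C) - z'))
      have hcoe : (((u⁻¹ * t : Kp)) : C) = ((u : C))⁻¹ * (t : C) := by push_cast; ring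
      rw [hcoe]
      set T := ((t : C)) with hT
      set U := ((u : C)) with hU
      have hU0 : U ≠ 0 := by
        simpa [hU] using (fun h => hu0 (by exact_mod_cast h) : (u : C) = 0 → False)
      have hTz : T - z ≠ 0 := sub_ne_zero.2 (coe_ne_of_not_range hz t)
      have hTz' : T - z' ≠ 0 := sub_ne_zero.2 (coe_ne_of_not_range hz' t)
      have hTUz' : U⁻¹ * T - z' ≠ 0 := by
        have h' : U⁻¹ * T = (((u⁻¹ * t : Kp)) : C) := by rw [hcoe]
        rw [h']
        exact sub_ne_zero.2 (coe_ne_of_not_range hz' (u⁻¹ * t))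
      have h1 : U⁻¹ * T - z = U⁻¹ * (T - U * z) := by
        rw [mul_sub, inv_mul_cancel_left₀ hU0]
      have h2 : U⁻¹ * T - z' = U⁻¹ * (T - U * z') := by
        rw [mul_sub, inv_mul_cancel_left₀ hU0]
      have hUz' : T - U * z' ≠ 0 := by
        intro h
        rw [h2, h, mul_zero] at hTUz'
        exact hTUz' rfl
      rw [h1, h2, mul_div_mul_left _ _ (inv_ne_zero hU0)]
      field_simp


end Geometry

section Comparison

variable {C : Type*} [NormedField C] [IsUltrametricDist C] {X : Type*} [TopologicalSpace X]

/-- The refinement comparison: a Riemann product over the common refinement of `𝒳` with a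
partition `𝒴` is multiplicatively `δ`-close to the Riemann product over `𝒳`, provided the
integrand oscillates by at most `δ` on each member of `𝒳`. -/
lemma comparison (μ : Set X → ℤ)
    (hadd : ∀ U V : Set X, IsCompactOpen U → IsCompactOpen V → Disjoint U V →
      μ (U ∪ V) = μ U + μ V)
    (g : X → C) (hg : ∀ p, g p ≠ 0)
    {δ : ℝ} (hδ0 : 0 ≤ δ) (hδ1 : δ < 1)
    (𝒳 𝒴 : Finset (Set X)) (h𝒳 : ∀ U ∈ 𝒳, IsCompactOpen U)
    (h𝒴 : IsCompactOpenPartition Set.univ 𝒴)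
    (hGood : ∀ U ∈ 𝒳, U.Nonempty → ∀ p ∈ U, ∀ q ∈ U, ‖g p / g q - 1‖ ≤ δ)
    (τ : Set X → X) (hτ : ∀ S : Set X, S.Nonempty → τ S ∈ S)
    (σ : Set X → X) (hσ : ∀ U ∈ 𝒳, U.Nonempty → σ U ∈ U) :
    ‖(∏ U ∈ 𝒳, ∏ V ∈ 𝒴, g (τ (U ∩ V)) ^ μ (U ∩ V))
        - ∏ U ∈ 𝒳, g (σ U) ^ μ U‖
      ≤ δ * ‖∏ U ∈ 𝒳, g (σ U) ^ μ U‖ := by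
  classical
  set CP := ∏ U ∈ 𝒳, g (σ U) ^ μ U with hCP
  set D := ∏ U ∈ 𝒳, ∏ V ∈ 𝒴, g (τ (U ∩ V)) ^ μ (U ∩ V) with hD
  set W := ∏ U ∈ 𝒳, ∏ V ∈ 𝒴, (g (τ (U ∩ V)) / g (σ U)) ^ μ (U ∩ V) with hW
  have hCP2 : CP = ∏ U ∈ 𝒳, ∏ V ∈ 𝒴, g (σ U) ^ μ (U ∩ V) := by
    refine Finset.prod_congr rfl (fun U hU => ?_)
    rw [mu_fiber μ hadd (h𝒳 U hU) h𝒴, zpow_finset_sum (hg _)]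
  have hDW : D = CP * W := by
    rw [hCP2, hW, ← Finset.prod_mul_distrib]
    refine Finset.prod_congr rfl (fun U hU => ?_)
    rw [← Finset.prod_mul_distrib]
    refine Finset.prod_congr rfl (fun V hV => ?_)
    rw [← mul_zpow, mul_div_cancel₀ _ (hg _)]
  have hWbound : ‖W - 1‖ ≤ δ := by
    rw [hW, ← Finset.prod_product']
    refine norm_prod_zpow_sub_one_le hδ0 hδ1 ?_
    rintro ⟨U, V⟩ hUV hm
    rw [Finset.mem_product] at hUV
    have hne : (U ∩ V).Nonempty := by
      rcases Set.eq_empty_or_nonempty (U ∩ V) with h | h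
      · exact absurd (h ▸ mu_empty μ hadd) hm
      · exact h
    have hUne : U.Nonempty := hne.mono Set.inter_subset_left
    exact hGood U hUV.1 hUne _ (Set.inter_subset_left (hτ _ hne)) _ (hσ U hUV.1 hUne)
  calc ‖D - CP‖ = ‖CP * (W - 1)‖ := by rw [mul_sub, mul_one, ← hDW]
    _ = ‖CP‖ * ‖W - 1‖ := norm_mul _ _
    _ ≤ ‖CP‖ * δ := mul_le_mul_of_nonneg_left hWbound (norm_nonneg _)
    _ = δ * ‖CP‖ := mul_comm _ _


end Comparison

end HLaux

namespace HLaux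

section CaseA

variable {C : Type*} [NormedField C] [IsUltrametricDist C] {Kp : Subfield C}

lemma no_compact_open (hcase : ¬ ∃ W : Set Kp, W.Nonempty ∧ IsCompact W ∧ IsOpen W)
    {W : Set (OnePoint Kp)} (hW : IsCompactOpen W) (hinf : (∞ : OnePoint Kp) ∉ W) :
    W = ∅ := by
  by_contra hne
  obtain ⟨p, hp⟩ := Set.nonempty_iff_ne_empty.2 hne
  cases p with
  | infty => exact hinf hp
  | coe t =>
      set S : Set Kp := ((↑) : Kp → OnePoint Kp) ⁻¹' W with hS
      have hWS : W = ((↑) : Kp → OnePoint Kp) '' S := by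
        ext q
        cases q with
        | infty =>
            simp only [Set.mem_image]
            constructor
            · intro h; exact absurd h hinf
            · rintro ⟨y, _, h⟩; exact absurd h (OnePoint.coe_ne_infty y)
        | coe y =>
            simp only [Set.mem_image, hS, Set.mem_preimage]
            constructor
            · intro h; exact ⟨y, h, rfl⟩
            · rintro ⟨y', hy', h⟩; rwa [← OnePoint.coe_eq_coe.1 h]
      refine hcase ⟨S, ⟨t, hp⟩, ?_, ?_⟩
      · have : IsCompact (((↑) : Kp → OnePoint Kp) '' S) := hWS ▸ hW.1
        exact (OnePoint.isOpenEmbedding_coe.isEmbedding.isCompact_iff).2 this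
      · exact (OnePoint.isOpen_iff_of_notMem hinf).1 hW.2

end CaseA

end HLaux

/-- Lemma 3.1 of Hauer–Longhi.  Let `μ` be a `ℤ`-valued finitely additive
measure of total mass `0` on `ℙ¹(F_𝔭) = F_𝔭 ∪ {∞}`, invariant under the
Möbius action `t ↦ u·t`, `∞ ↦ ∞` of `γ_ψ = diag(u,1)`, where `ν_𝔭(u) = h > 0`
(i.e. `0 < ‖u‖ < 1`).  Then Darmon's period
`I = ⨉∫_{ℙ¹(F_𝔭)} ((t − γ_ψ z)/(t − z)) dμ(t)` (the integrand extended by `1`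
at `∞`) is independent of the choice of the base point `z ∈ Ω_𝔭`. -/
theorem period_independent_of_basepoint {C : Type*} [NormedField C]
    [CompleteSpace C] [IsUltrametricDist C] (Kp : Subfield C)
    (μ : Set (OnePoint Kp) → ℤ)
    (hadd : ∀ U V : Set (OnePoint Kp), IsCompactOpen U → IsCompactOpen V →
      Disjoint U V → μ (U ∪ V) = μ U + μ V)
    (hmass : μ Set.univ = 0)
    (u : Kp) (hu0 : u ≠ 0) (hu1 : ‖(u : C)‖ < 1)
    (hinv : ∀ V : Set (OnePoint Kp),
      μ ((fun p : OnePoint Kp => p.elim OnePoint.infty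
        (fun t => OnePoint.some (u * t))) '' V) = μ V)
    (z z' : C)
    (hz : z ∉ Set.range (fun t : Kp => (t : C)))
    (hz' : z' ∉ Set.range (fun t : Kp => (t : C)))
    (I I' : C)
    (hI : IsMulIntegral μ
      (fun p : OnePoint Kp =>
        p.elim 1 (fun t => ((t : C) - (u : C) * z) / ((t : C) - z))) I)
    (hI' : IsMulIntegral μ
      (fun p : OnePoint Kp =>
        p.elim 1 (fun t => ((t : C) - (u : C) * z') / ((t : C) - z'))) I') :
    I = I' := by
  classical
  open HLaux in
  -- global tag function
  set τ : Set (OnePoint Kp) → OnePoint Kp :=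
    (fun S => if h : S.Nonempty then h.some else (∞ : OnePoint Kp)) with hτdef
  have hτ : ∀ S : Set (OnePoint Kp), S.Nonempty → τ S ∈ S := by
    intro S h
    simp only [hτdef, dif_pos h]
    exact h.some_mem
  by_cases hcase : ∃ W : Set Kp, W.Nonempty ∧ IsCompact W ∧ IsOpen W
  swap
  · -- no nonempty compact open subsets of Kp : all partitions are trivial and both periods are 1
    have hone : ∀ (f : OnePoint Kp → C) (J : C), IsMulIntegral μ f J → J = 1 := by
      intro f J hJ
      have key : ∀ ε : ℝ, 0 < ε → ‖(1 : C) - J‖ < ε := by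
        intro ε hε
        obtain ⟨Q, hQ, hspec⟩ := hJ ε hε
        have h1 := hspec Q hQ (fun U hU => ⟨U, hU, subset_rfl⟩) τ (fun U _ h => hτ U h)
        have hprod : (∏ U ∈ Q, f (τ U) ^ μ U) = 1 := by
          apply Finset.prod_eq_one
          intro U hU
          rcases Set.eq_empty_or_nonempty U with rfl | hUne
          · rw [HLaux.mu_empty μ hadd, zpow_zero]
          · by_cases hinf : (∞ : OnePoint Kp) ∈ U
            · have hUuniv : U = Set.univ := by
                apply Set.eq_univ_of_forall
                intro p
                have hcov : p ∈ ⋃ V ∈ Q, V := by rw [hQ.2.1]; trivial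
                rcases Set.mem_iUnion₂.1 hcov with ⟨V, hV, hpV⟩
                rcases eq_or_ne V U with rfl | hne
                · exact hpV
                · have hd : Disjoint V U := hQ.2.2 hV hU hne
                  have hVinf : (∞ : OnePoint Kp) ∉ V := fun h => Set.disjoint_left.1 hd h hinf
                  have hVempty : V = ∅ := HLaux.no_compact_open hcase (hQ.1 V hV) hVinf
                  rw [hVempty] at hpV
                  exact absurd hpV (Set.notMem_empty p)
              rw [hUuniv, hmass, zpow_zero]
            · have hUempty := HLaux.no_compact_open hcase (hQ.1 U hU) hinf
              rw [hUempty] at hUne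
              exact absurd hUne (by simp)
        rw [hprod] at h1
        exact h1
      have hle : ‖(1 : C) - J‖ ≤ 0 := by
        by_contra h
        exact lt_irrefl _ (key ‖(1 : C) - J‖ (lt_of_not_ge h))
      have : (1 : C) - J = 0 := by rwa [norm_le_zero_iff] at hle
      exact (sub_eq_zero.1 this).symm
    rw [hone _ I hI, hone _ I' hI']
  · -- main case : Kp is locally compact
    -- it suffices to bound ‖I - I'‖ by every positive η
    suffices hnorm : ∀ η : ℝ, 0 < η → ‖I - I'‖ ≤ η by
      by_contra hne
      have hpos : 0 < ‖I - I'‖ := by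
        rw [norm_pos_iff, sub_ne_zero]; exact hne
      have := hnorm (‖I - I'‖ / 2) (by linarith)
      linarith
    intro η hη
    -- abbreviations for the two integrands and for g
    set Fz0 : OnePoint Kp → C :=
      fun p => p.elim 1 (fun t => ((t : C) - (u : C) * z) / ((t : C) - z)) with hFz0
    set Fz0' : OnePoint Kp → C :=
      fun p => p.elim 1 (fun t => ((t : C) - (u : C) * z') / ((t : C) - z')) with hFz0'
    set g : OnePoint Kp → C := HLaux.gfun Kp z z' with hgdef
    have hg0 : ∀ p, g p ≠ 0 := HLaux.gfun_ne_zero hz hz'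
    -- numerical constants
    set ε := min (η / 4) 1 with hεdef
    have hε : 0 < ε := lt_min (by linarith) one_pos
    have hε1 : ε ≤ 1 := min_le_right _ _
    have hεη : ε ≤ η / 4 := min_le_left _ _
    set δ := min (η / (4 * (‖I'‖ + 1))) (1 / 2) with hδdef
    have hδ0 : 0 < δ := lt_min (by positivity) (by norm_num)
    have hδ1 : δ < 1 := lt_of_le_of_lt (min_le_right _ _) (by norm_num)
    obtain ⟨Q, hQ, hQspec⟩ := hI ε hε
    obtain ⟨Q', hQ', hQ'spec⟩ := hI' ε hε
    -- geometric constants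
    set nu := ‖(u : C)‖ with hnudef
    have hnu0 : 0 < nu := norm_pos_iff.mpr (by exact_mod_cast hu0)
    have hnu1 : nu < 1 := hu1
    set r := max (max (‖z‖ + 1) (‖z'‖ + 1)) ((‖z - z'‖ + 1) / δ) with hrdef
    have hzr : ‖z‖ < r :=
      lt_of_lt_of_le (by linarith) ((le_max_left (‖z‖+1) (‖z'‖+1)).trans (le_max_left _ _))
    have hz'r : ‖z'‖ < r :=
      lt_of_lt_of_le (by linarith) ((le_max_right (‖z‖+1) (‖z'‖+1)).trans (le_max_left _ _))
    have hr0 : 0 < r := lt_of_le_of_lt (norm_nonneg z) hzr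
    have hzz'r : ‖z - z'‖ ≤ δ * r := by
      have h1 : (‖z - z'‖ + 1) / δ ≤ r := le_max_right _ _
      calc ‖z - z'‖ ≤ ‖z - z'‖ + 1 := by linarith
        _ ≤ r * δ := (div_le_iff₀ hδ0).1 h1
        _ = δ * r := mul_comm _ _
    have hrru : r ≤ r / nu := by
      rw [le_div_iff₀ hnu0]; nlinarith
    -- uniform distance from balls to z and z'
    have hcptC : IsCompact ((Subtype.val '' (HLaux.KB Kp 0 (r / nu))) : Set C) :=
      (HLaux.isCompact_KB hcase u hu0 hu1 0 (r / nu)).image continuous_subtype_val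
    have h0mem : (0 : Kp) ∈ HLaux.KB Kp 0 (r / nu) := by
      have : (0:ℝ) ≤ r / nu := by positivity
      simpa [HLaux.mem_KB] using this
    have hne : ((Subtype.val '' (HLaux.KB Kp 0 (r / nu))) : Set C).Nonempty :=
      ⟨((0 : Kp) : C), Set.mem_image_of_mem _ h0mem⟩
    have hFcont : Continuous (fun c : C => min ‖c - z‖ ‖c - z'‖) :=
      ((continuous_id.sub continuous_const).norm).min ((continuous_id.sub continuous_const).norm)
    obtain ⟨c₀, hc₀mem, hc₀min⟩ := hcptC.exists_isMinOn hne hFcont.continuousOn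
    set d := min ‖c₀ - z‖ ‖c₀ - z'‖ with hddef
    have hd0 : 0 < d := by
      obtain ⟨w₀, _, rfl⟩ := hc₀mem
      exact lt_min (norm_pos_iff.2 (sub_ne_zero.2 (HLaux.coe_ne_of_not_range hz w₀)))
        (norm_pos_iff.2 (sub_ne_zero.2 (HLaux.coe_ne_of_not_range hz' w₀)))
    have hd : ∀ w : Kp, w ∈ HLaux.KB Kp 0 (r / nu) →
        d ≤ ‖(w : C) - z‖ ∧ d ≤ ‖(w : C) - z'‖ := by
      intro w hw
      have h := isMinOn_iff.1 hc₀min _ (Set.mem_image_of_mem _ hw)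
      exact ⟨le_trans h (min_le_left _ _), le_trans h (min_le_right _ _)⟩
    -- the small radius
    set s := min r (nu * δ * (d * d) / (‖z - z'‖ + 1)) with hsdef
    have hs0 : 0 < s := lt_min hr0 (by positivity)
    have hsr : s ≤ r := min_le_left _ _
    have hsmall : s ≤ nu * δ * (d * d) / (‖z - z'‖ + 1) := min_le_right _ _
    have hX0 : (0:ℝ) ≤ ‖z - z'‖ := norm_nonneg _
    have hq0 : (0:ℝ) ≤ nu * δ * (d * d) / (‖z - z'‖ + 1) := by positivity
    have hqq : nu * δ * (d * d) / (‖z - z'‖ + 1) * (‖z - z'‖ + 1) = nu * δ * (d * d) :=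
      div_mul_cancel₀ _ (by positivity)
    have haux : s * ‖z - z'‖ ≤ nu * δ * (d * d) := by
      have h1 : s * ‖z - z'‖ ≤ nu * δ * (d * d) / (‖z - z'‖ + 1) * ‖z - z'‖ :=
        mul_le_mul_of_nonneg_right hsmall hX0
      have h2 : nu * δ * (d * d) / (‖z - z'‖ + 1) * ‖z - z'‖
          ≤ nu * δ * (d * d) / (‖z - z'‖ + 1) * (‖z - z'‖ + 1) :=
        mul_le_mul_of_nonneg_left (by linarith) hq0
      linarith [hqq]
    have hnud : nu * δ * (d * d) ≤ δ * (d * d) := by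
      have h1 : nu * δ ≤ 1 * δ := mul_le_mul_of_nonneg_right hnu1.le hδ0.le
      have h2 : nu * δ * (d * d) ≤ 1 * δ * (d * d) :=
        mul_le_mul_of_nonneg_right h1 (by positivity)
      linarith
    have hsb1 : s * ‖z - z'‖ ≤ δ * (d * d) := le_trans haux hnud
    have hsb2 : s / nu * ‖z - z'‖ ≤ δ * (d * d) := by
      rw [div_mul_eq_mul_div, div_le_iff₀ hnu0]
      nlinarith [haux]
    -- the fine ball partition QB, and the common refinement PP of Q, Q', QB
    obtain ⟨QB, hQB, hQBstr⟩ := HLaux.exists_ball_partition hcase u hu0 hu1 hs0 hsr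
    set T := (Q ×ˢ Q') ×ˢ QB with hTdef
    set pc : (Set (OnePoint Kp) × Set (OnePoint Kp)) × Set (OnePoint Kp) → Set (OnePoint Kp) :=
      fun x => x.1.1 ∩ (x.1.2 ∩ x.2) with hpcdef
    set PP := T.image pc with hPPdef
    have hQ'c : ∀ V ∈ Q', IsClosed V := fun V hV => HLaux.piece_closed hQ' hV
    have hQBc : ∀ W ∈ QB, IsClosed W := fun W hW => HLaux.piece_closed hQB hW
    have hPPco : ∀ U ∈ PP, IsCompactOpen U := by
      intro U hU
      obtain ⟨x, hx, rfl⟩ := Finset.mem_image.1 hU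
      obtain ⟨hx1, hx2⟩ := Finset.mem_product.1 hx
      obtain ⟨hx11, hx12⟩ := Finset.mem_product.1 hx1
      exact ⟨(hQ.1 _ hx11).1.inter_right ((hQ'c _ hx12).inter (hQBc _ hx2)),
        (hQ.1 _ hx11).2.inter ((hQ'.1 _ hx12).2.inter ((hQB.1 _ hx2).2))⟩
    have hcover : (⋃ U ∈ PP, U) = Set.univ := by
      rw [Set.eq_univ_iff_forall]
      intro p
      have hp1 : p ∈ ⋃ V ∈ Q, V := by rw [hQ.2.1]; trivial
      have hp2 : p ∈ ⋃ V ∈ Q', V := by rw [hQ'.2.1]; trivial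
      have hp3 : p ∈ ⋃ V ∈ QB, V := by rw [hQB.2.1]; trivial
      obtain ⟨a, ha, hpa⟩ := Set.mem_iUnion₂.1 hp1
      obtain ⟨b, hb, hpb⟩ := Set.mem_iUnion₂.1 hp2
      obtain ⟨c, hc, hpc⟩ := Set.mem_iUnion₂.1 hp3
      have hmemT : ((a, b), c) ∈ T :=
        Finset.mem_product.2 ⟨Finset.mem_product.2 ⟨ha, hb⟩, hc⟩
      exact Set.mem_biUnion (Finset.mem_image_of_mem pc hmemT) ⟨hpa, hpb, hpc⟩
    have hdisj : ((PP : Set (Set (OnePoint Kp)))).PairwiseDisjoint id := by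
      intro Aset hA Bset hB hAB
      simp only [Function.onFun, id_eq]
      simp only [hPPdef, Finset.coe_image, Set.mem_image, Finset.mem_coe] at hA hB
      obtain ⟨x, hx, rfl⟩ := hA
      obtain ⟨y, hy, rfl⟩ := hB
      obtain ⟨hx1, hx2⟩ := Finset.mem_product.1 hx
      obtain ⟨hx11, hx12⟩ := Finset.mem_product.1 hx1
      obtain ⟨hy1, hy2⟩ := Finset.mem_product.1 hy
      obtain ⟨hy11, hy12⟩ := Finset.mem_product.1 hy1
      by_cases h1 : x.1.1 = y.1.1
      · by_cases h2 : x.1.2 = y.1.2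
        · by_cases h3 : x.2 = y.2
          · exfalso
            apply hAB
            simp only [hpcdef]
            rw [h1, h2, h3]
          · have hd3 := hQB.2.2 (Finset.mem_coe.2 hx2) (Finset.mem_coe.2 hy2) h3
            simp only [Function.onFun, id_eq] at hd3
            exact Disjoint.mono (fun p hp => hp.2.2) (fun p hp => hp.2.2) hd3
        · have hd2 := hQ'.2.2 (Finset.mem_coe.2 hx12) (Finset.mem_coe.2 hy12) h2
          simp only [Function.onFun, id_eq] at hd2
          exact Disjoint.mono (fun p hp => hp.2.1) (fun p hp => hp.2.1) hd2
      · have hd1 := hQ.2.2 (Finset.mem_coe.2 hx11) (Finset.mem_coe.2 hy11) h1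
        simp only [Function.onFun, id_eq] at hd1
        exact Disjoint.mono (fun p hp => hp.1) (fun p hp => hp.1) hd1
    have hPPpart : IsCompactOpenPartition Set.univ PP := ⟨hPPco, hcover, hdisj⟩
    have hPPrefQ : PartitionRefines PP Q := by
      intro U hU
      obtain ⟨x, hx, rfl⟩ := Finset.mem_image.1 hU
      obtain ⟨hx1, _⟩ := Finset.mem_product.1 hx
      obtain ⟨hx11, _⟩ := Finset.mem_product.1 hx1
      exact ⟨x.1.1, hx11, fun p hp => hp.1⟩
    have hPPrefQ' : PartitionRefines PP Q' := by
      intro U hU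
      obtain ⟨x, hx, rfl⟩ := Finset.mem_image.1 hU
      obtain ⟨hx1, _⟩ := Finset.mem_product.1 hx
      obtain ⟨_, hx12⟩ := Finset.mem_product.1 hx1
      exact ⟨x.1.2, hx12, fun p hp => hp.2.1⟩
    have hPPstr : ∀ U ∈ PP, ∃ W ∈ QB, U ⊆ W := by
      intro U hU
      obtain ⟨x, hx, rfl⟩ := Finset.mem_image.1 hU
      obtain ⟨_, hx2⟩ := Finset.mem_product.1 hx
      exact ⟨x.2, hx2, fun p hp => hp.2.2⟩
    -- shifted partition
    set PX := PP.image (fun U => HLaux.phi u⁻¹ '' U) with hPXdef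
    have hPXpart : IsCompactOpenPartition Set.univ PX :=
      HLaux.image_partition (inv_ne_zero hu0) hPPpart
    -- the two Riemann products approximate I and I'
    have hZI : ‖(∏ U ∈ PP, Fz0 (τ U) ^ μ U) - I‖ < ε :=
      hQspec PP hPPpart hPPrefQ τ (fun U _ h => hτ U h)
    have hZ'I' : ‖(∏ U ∈ PP, Fz0' (τ U) ^ μ U) - I'‖ < ε :=
      hQ'spec PP hPPpart hPPrefQ' τ (fun U _ h => hτ U h)
    set Z := ∏ U ∈ PP, Fz0 (τ U) ^ μ U with hZdef
    set Z' := ∏ U ∈ PP, Fz0' (τ U) ^ μ U with hZ'def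
    set A := ∏ U ∈ PP, g (τ U) ^ μ U with hAdef
    set Ash := ∏ U ∈ PP, g (HLaux.phi u⁻¹ (τ U)) ^ μ U with hAshdef
    -- the exact identity  Z·A = Z'·Ash
    have hpt : ∀ p, Fz0 p * g p = Fz0' p * g (HLaux.phi u⁻¹ p) := fun p =>
      HLaux.key_id u hu0 z z' hz hz' p
    have hexact : Z * A = Z' * Ash := by
      rw [hZdef, hAdef, hZ'def, hAshdef, ← Finset.prod_mul_distrib, ← Finset.prod_mul_distrib]
      refine Finset.prod_congr rfl fun U _ => ?_
      rw [← mul_zpow, ← mul_zpow, hpt (τ U)]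
    -- oscillation bounds
    have hdr : ∀ t : Kp, t ∈ HLaux.KB Kp 0 r →
        d ≤ ‖(t : C) - z‖ ∧ d ≤ ‖(t : C) - z'‖ :=
      fun t ht => hd t (HLaux.KB_mono 0 hrru ht)
    have hGoodPP : ∀ U ∈ PP, U.Nonempty → ∀ p ∈ U, ∀ q ∈ U, ‖g p / g q - 1‖ ≤ δ := by
      intro U hU hUne
      obtain ⟨W, hW, hUW⟩ := hPPstr U hU
      rcases hQBstr W hW with ⟨x, hx, rfl⟩ | rfl
      · refine HLaux.good_near hz hz' hd0 hδ0.le hsb1 (c := ((x : Kp) : C)) ?_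
        intro p hp
        obtain ⟨t, ht, rfl⟩ := hUW hp
        have htr : t ∈ HLaux.KB Kp 0 r := HLaux.KB_subset_zero hx hsr ht
        obtain ⟨hdz1, hdz2⟩ := hdr t htr
        exact ⟨t, rfl, ht, hdz1, hdz2⟩
      · exact HLaux.good_far hz hz' hr0 hzr hz'r hδ0.le hzz'r (fun p hp => hUW hp)
    have hcoeinv : ∀ t : Kp, (((u⁻¹ * t : Kp)) : C) = ((u : C))⁻¹ * (t : C) := by
      intro t; push_cast; ring
    have hGoodPX : ∀ V ∈ PX, V.Nonempty → ∀ p ∈ V, ∀ q ∈ V, ‖g p / g q - 1‖ ≤ δ := by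
      intro V hV hVne
      obtain ⟨U, hU, rfl⟩ := Finset.mem_image.1 hV
      obtain ⟨W, hW, hUW⟩ := hPPstr U hU
      have hVW : HLaux.phi u⁻¹ '' U ⊆ HLaux.phi u⁻¹ '' W := Set.image_mono hUW
      rcases hQBstr W hW with ⟨x, hx, rfl⟩ | rfl
      · refine HLaux.good_near hz hz' hd0 hδ0.le hsb2 (c := ((u : C))⁻¹ * ((x : Kp) : C)) ?_
        intro p hp
        obtain ⟨q, hq, rfl⟩ := hVW hp
        obtain ⟨t, ht, rfl⟩ := hq
        have htr : t ∈ HLaux.KB Kp 0 r := HLaux.KB_subset_zero hx hsr ht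
        have htnorm : ‖(t : C)‖ ≤ r := by
          have := (HLaux.mem_KB).1 htr
          simpa using this
        refine ⟨u⁻¹ * t, rfl, ?_, ?_⟩
        · rw [hcoeinv t, ← mul_sub, norm_mul, norm_inv]
          rw [div_eq_inv_mul]
          exact mul_le_mul_of_nonneg_left ht (by positivity)
        · have hmem : u⁻¹ * t ∈ HLaux.KB Kp 0 (r / nu) := by
            rw [HLaux.mem_KB]
            have : ‖(((u⁻¹ * t : Kp)) : C)‖ ≤ r / nu := by
              rw [hcoeinv t, norm_mul, norm_inv, div_eq_inv_mul]
              exact mul_le_mul_of_nonneg_left htnorm (by positivity)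
            simpa using this
          exact hd _ hmem
      · refine HLaux.good_far hz hz' hr0 hzr hz'r hδ0.le hzz'r ?_
        intro p hp
        obtain ⟨q, hq, rfl⟩ := hVW hp
        rcases hq with rfl | ⟨t, rfl, htr⟩
        · exact Or.inl rfl
        · refine Or.inr ⟨u⁻¹ * t, rfl, ?_⟩
          rw [hcoeinv t, norm_mul, norm_inv]
          have h1 : (1:ℝ) ≤ nu⁻¹ := by
            rw [le_inv_comm₀] <;> simp [hnu0, hnu1.le]
          calc r < ‖(t : C)‖ := htr
            _ = 1 * ‖(t : C)‖ := (one_mul _).symm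
            _ ≤ nu⁻¹ * ‖(t : C)‖ := mul_le_mul_of_nonneg_right h1 (norm_nonneg _)
    -- the two refinement comparisons
    set D := ∏ U ∈ PP, ∏ V ∈ PX, g (τ (U ∩ V)) ^ μ (U ∩ V) with hDdef
    have hcomp1 : ‖D - A‖ ≤ δ * ‖A‖ :=
      HLaux.comparison μ hadd g hg0 hδ0.le hδ1 PP PX hPPpart.1 hPXpart hGoodPP τ hτ τ
        (fun U _ h => hτ U h)
    set τ' : Set (OnePoint Kp) → OnePoint Kp :=
      fun V => HLaux.phi u⁻¹ (τ (HLaux.phi u '' V)) with hτ'def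
    have hτ'mem : ∀ V ∈ PX, V.Nonempty → τ' V ∈ V := by
      intro V hV hVne
      obtain ⟨U, hU, rfl⟩ := Finset.mem_image.1 hV
      have hUne : U.Nonempty := by
        obtain ⟨p, hp⟩ := hVne
        obtain ⟨q, hq, _⟩ := hp
        exact ⟨q, hq⟩
      have h1 : HLaux.phi u '' (HLaux.phi u⁻¹ '' U) = U := HLaux.phi_image_image u hu0 U
      simp only [hτ'def, h1]
      exact Set.mem_image_of_mem _ (hτ U hUne)
    have hcomp2' : ‖(∏ V ∈ PX, ∏ U ∈ PP, g (τ (V ∩ U)) ^ μ (V ∩ U))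
        - ∏ V ∈ PX, g (τ' V) ^ μ V‖ ≤ δ * ‖∏ V ∈ PX, g (τ' V) ^ μ V‖ :=
      HLaux.comparison μ hadd g hg0 hδ0.le hδ1 PX PP hPXpart.1 hPPpart hGoodPX τ hτ τ' hτ'mem
    have hDD : (∏ V ∈ PX, ∏ U ∈ PP, g (τ (V ∩ U)) ^ μ (V ∩ U)) = D := by
      rw [Finset.prod_comm]
      exact Finset.prod_congr rfl fun U _ => Finset.prod_congr rfl fun V _ => by
        rw [Set.inter_comm]
    have hAsheq : (∏ V ∈ PX, g (τ' V) ^ μ V) = Ash := by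
      rw [hPXdef, Finset.prod_image ?inj]
      case inj =>
        intro x hx y hy hxy
        have := congrArg (Set.image (HLaux.phi u)) hxy
        rwa [HLaux.phi_image_image u hu0, HLaux.phi_image_image u hu0] at this
      rw [hAshdef]
      refine Finset.prod_congr rfl fun U hU => ?_
      have h1 : τ' (HLaux.phi u⁻¹ '' U) = HLaux.phi u⁻¹ (τ U) := by
        simp only [hτ'def, HLaux.phi_image_image u hu0]
      have h2 : μ (HLaux.phi u⁻¹ '' U) = μ U :=
        HLaux.mu_phi_inv_image μ u hu0 hinv U
      rw [h1, h2]
    have hcomp2 : ‖D - Ash‖ ≤ δ * ‖Ash‖ := by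
      rw [← hDD, ← hAsheq]
      exact hcomp2'
    -- norm bookkeeping
    have hAne : A ≠ 0 := by
      rw [hAdef]
      exact Finset.prod_ne_zero_iff.2 fun U _ => zpow_ne_zero _ (hg0 _)
    have hAshne : Ash ≠ 0 := by
      rw [hAshdef]
      exact Finset.prod_ne_zero_iff.2 fun U _ => zpow_ne_zero _ (hg0 _)
    have hA0 : 0 < ‖A‖ := norm_pos_iff.2 hAne
    have hAsh0 : 0 < ‖Ash‖ := norm_pos_iff.2 hAshne
    have hDA : ‖D‖ = ‖A‖ :=
      HLaux.norm_eq_of_norm_sub_lt (lt_of_le_of_lt hcomp1 (by nlinarith))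
    have hDAsh : ‖D‖ = ‖Ash‖ :=
      HLaux.norm_eq_of_norm_sub_lt (lt_of_le_of_lt hcomp2 (by nlinarith))
    have hAshA : ‖Ash - A‖ ≤ δ * ‖A‖ := by
      have h1 : Ash - A = (Ash - D) + (D - A) := by ring
      rw [h1]
      refine le_trans (IsUltrametricDist.norm_add_le_max _ _) (max_le ?_ hcomp1)
      rw [norm_sub_rev]
      calc ‖D - Ash‖ ≤ δ * ‖Ash‖ := hcomp2
        _ = δ * ‖A‖ := by rw [← hDAsh, hDA]
    -- transfer to Z, Z'
    have hZZ' : ‖Z - Z'‖ ≤ δ * ‖Z'‖ := by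
      have h1 : (Z - Z') * A = Z' * (Ash - A) := by
        rw [sub_mul, mul_sub, hexact]
      have h2 : ‖Z - Z'‖ * ‖A‖ = ‖Z'‖ * ‖Ash - A‖ := by
        rw [← norm_mul, ← norm_mul, h1]
      have h3 : ‖Z'‖ * ‖Ash - A‖ ≤ ‖Z'‖ * (δ * ‖A‖) :=
        mul_le_mul_of_nonneg_left hAshA (norm_nonneg _)
      have h4 : ‖Z - Z'‖ * ‖A‖ ≤ (δ * ‖Z'‖) * ‖A‖ := by nlinarith [h2, h3]
      exact le_of_mul_le_mul_right h4 hA0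
    have hZ'bound : ‖Z'‖ ≤ ‖I'‖ + ε := by
      have h0 : Z' = (Z' - I') + I' := by ring
      calc ‖Z'‖ = ‖(Z' - I') + I'‖ := by rw [← h0]
        _ ≤ ‖Z' - I'‖ + ‖I'‖ := norm_add_le _ _
        _ ≤ ‖I'‖ + ε := by linarith [le_of_lt hZ'I']
    -- final estimate
    have hIZ : ‖I - Z‖ < ε := by rw [norm_sub_rev]; exact hZI
    calc ‖I - I'‖ = ‖(I - Z) + ((Z - Z') + (Z' - I'))‖ := by ring_nf
      _ ≤ ‖I - Z‖ + ‖(Z - Z') + (Z' - I')‖ := norm_add_le _ _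
      _ ≤ ‖I - Z‖ + (‖Z - Z'‖ + ‖Z' - I'‖) := by
          linarith [norm_add_le (Z - Z') (Z' - I')]
      _ ≤ ε + (δ * ‖Z'‖ + ε) := by
          linarith [le_of_lt hZ'I', hZZ', le_of_lt hIZ]
      _ ≤ η := by
          have h2 : δ * ‖Z'‖ ≤ δ * (‖I'‖ + 1) :=
            mul_le_mul_of_nonneg_left (by linarith) hδ0.le
          have h3 : δ * (‖I'‖ + 1) ≤ (η / (4 * (‖I'‖ + 1))) * (‖I'‖ + 1) :=
            mul_le_mul_of_nonneg_right (min_le_left _ _) (by positivity)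
          have h4 : (η / (4 * (‖I'‖ + 1))) * (‖I'‖ + 1) = η / 4 := by
            field_simp
          linarith [hεη]

end
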